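/- Let ρ > 0 be a real parameter and define H(q, p̄) = 2·∫₀^{p̄} log((ρ + e^ξ)/(1 + ρ·e^ξ)) dξ + 2·∫₀^{q} log((ρ + e^ξ)/(1 + ρ·e^ξ)) dξ. Then the MKdV map of one degree of freedom, p̄ = p + 2·log((1 + ρ·e^q)/(ρ + e^q)), q̄ = q + 2·log((ρ + e^{p̄})/(1 + ρ·e^{p̄})), satisfies the discrete Hamilton equations p̄ − p = −∂H/∂q (q, p̄) and q̄ − q = ∂H/∂p̄ (q, p̄); that is, H is a generating function of the map. -/
import Mathlib


noncomputable section

/-- The discrete Hamiltonian (generating function) of the one-degree-of-freedom MKdV map: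
`H(q,p̄) = 2∫₀^{p̄} log((ρ+e^ξ)/(1+ρe^ξ)) dξ + 2∫₀^{q} log((ρ+e^ξ)/(1+ρe^ξ)) dξ`. -/
def mkdvH (ρ : ℝ) (q pbar : ℝ) : ℝ :=
  2 * (∫ ξ in (0:ℝ)..pbar, Real.log ((ρ + Real.exp ξ) / (1 + ρ * Real.exp ξ))) +
  2 * (∫ ξ in (0:ℝ)..q, Real.log ((ρ + Real.exp ξ) / (1 + ρ * Real.exp ξ)))

/-- The one-degree-of-freedom MKdV map satisfies the discrete Hamilton equations
`p̄ − p = −∂H/∂q (q,p̄)` and `q̄ − q = ∂H/∂p̄ (q,p̄)` for the generating function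
`H(q,p̄) = 2∫₀^{p̄} log((ρ+e^ξ)/(1+ρe^ξ)) dξ + 2∫₀^{q} log((ρ+e^ξ)/(1+ρe^ξ)) dξ`, `ρ > 0`. -/
theorem mkdv_map_discrete_hamilton (ρ : ℝ) (hρ : 0 < ρ) (q p : ℝ)
    (pbar : ℝ)
    (hpbar : pbar = p + 2 * Real.log ((1 + ρ * Real.exp q) / (ρ + Real.exp q)))
    (qbar : ℝ)
    (hqbar : qbar = q + 2 * Real.log ((ρ + Real.exp pbar) / (1 + ρ * Real.exp pbar))) :
    pbar - p = -(deriv (fun s => mkdvH ρ s pbar) q) ∧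
    qbar - q = deriv (fun s => mkdvH ρ q s) pbar := by
  set f : ℝ → ℝ := fun ξ => Real.log ((ρ + Real.exp ξ) / (1 + ρ * Real.exp ξ)) with hf
  have hnum : ∀ ξ : ℝ, 0 < ρ + Real.exp ξ := fun ξ => by positivity
  have hden : ∀ ξ : ℝ, 0 < 1 + ρ * Real.exp ξ := fun ξ => by positivity
  have hcont : Continuous f := by
    apply Continuous.log
    · exact (continuous_const.add Real.continuous_exp).div
        (continuous_const.add (continuous_const.mul Real.continuous_exp))
        (fun ξ => (hden ξ).ne')
    · exact fun ξ => (div_pos (hnum ξ) (hden ξ)).ne'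
  have key : ∀ b : ℝ, HasDerivAt (fun u => ∫ ξ in (0:ℝ)..u, f ξ) (f b) b :=
    fun b => (hcont.integral_hasStrictDerivAt 0 b).hasDerivAt
  have hlog : ∀ ξ : ℝ, Real.log ((1 + ρ * Real.exp ξ) / (ρ + Real.exp ξ)) = -(f ξ) := by
    intro ξ
    simp only [hf]
    rw [Real.log_div (hden ξ).ne' (hnum ξ).ne', Real.log_div (hnum ξ).ne' (hden ξ).ne']
    ring
  constructor
  · have h1 : HasDerivAt (fun s => mkdvH ρ s pbar) (2 * f q) q := by
      have := ((key q).const_mul 2).const_add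
        (2 * (∫ ξ in (0:ℝ)..pbar, f ξ))
      exact this
    rw [h1.deriv, hpbar, hlog q]; ring
  · have h2 : HasDerivAt (fun s => mkdvH ρ q s) (2 * f pbar) pbar := by
      have := (((key pbar).const_mul 2).add_const
        (2 * (∫ ξ in (0:ℝ)..q, f ξ)))
      exact this
    rw [h2.deriv, hqbar]; simp only [hf]; ring
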